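/- For every complex number z with Im z > θ, one has ∫₀^∞ g(t) e^{izt} dt = (1/z²) [ iB + i m₀/z + i Σₖ (1/(z − γₖ) + 1/γₖ) ], where the series on the right-hand side converges absolutely. -/

import Mathlib

open MeasureTheory Set Filter Asymptotics Complex Topology

section helpers

variable {s : ℂ}

lemma norm_cexp_neg (s : ℂ) (t : ℝ) : ‖Complex.exp (-(s*t))‖ = Real.exp (-(s.re*t)) := by
  rw [Complex.norm_exp]; norm_num

lemma neg_I_mul_re (w : ℂ) : (-(Complex.I*w)).re = w.im := by
  simp [Complex.mul_re]

lemma one_div_neg_I_mul {w : ℂ} (hw : w ≠ 0) : 1/(-(Complex.I*w)) = Complex.I/w := by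
  rw [div_eq_div_iff (by simp [Complex.I_ne_zero, hw]) hw, one_mul, mul_neg, ← mul_assoc,
    Complex.I_mul_I]
  ring

lemma hasDerivAt_cexp_neg (s : ℂ) (t : ℝ) :
    HasDerivAt (fun u : ℝ => Complex.exp (-(s*u))) (-s * Complex.exp (-(s*t))) t := by
  have h1 : HasDerivAt (fun w : ℂ => -(s*w)) (-s) (t:ℂ) := by
    simpa [Pi.neg_def] using ((hasDerivAt_id (t:ℂ)).const_mul s).neg
  have h : HasDerivAt (fun w : ℂ => Complex.exp (-(s*w))) (-s * Complex.exp (-(s*(t:ℂ)))) (t:ℂ) := by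
    simpa [mul_comm, Function.comp_def] using (Complex.hasDerivAt_exp (-(s*(t:ℂ)))).comp (t:ℂ) h1
  exact h.comp_ofReal

lemma tendsto_pow_cexp_neg (n : ℕ) (hs : 0 < s.re) :
    Tendsto (fun t : ℝ => (t:ℂ)^n * Complex.exp (-(s*t))) atTop (𝓝 0) := by
  have h := tendsto_rpow_mul_exp_neg_mul_atTop_nhds_zero n s.re hs
  apply squeeze_zero_norm' ?_ h
  filter_upwards [eventually_gt_atTop (0:ℝ)] with t ht
  rw [norm_mul, norm_pow, Complex.norm_real, Real.norm_eq_abs, abs_of_pos ht,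
    norm_cexp_neg, Real.rpow_natCast, neg_mul]

lemma integrableOn_pow_exp_neg (n : ℕ) {b : ℝ} (hb : 0 < b) :
    IntegrableOn (fun t : ℝ => t^n * Real.exp (-(b*t))) (Set.Ioi 0) := by
  apply integrable_of_isBigO_exp_neg (half_pos hb)
    (Continuous.continuousOn (by continuity))
  have h := tendsto_rpow_mul_exp_neg_mul_atTop_nhds_zero n (b/2) (half_pos hb)
  have h1 : (fun t:ℝ => t ^ (n:ℝ) * Real.exp (-(b/2) * t)) =O[atTop] (fun _ => (1:ℝ)) :=
    h.isBigO_one ℝ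
  have h2 := h1.mul (isBigO_refl (fun t:ℝ => Real.exp (-(b/2) * t)) atTop)
  refine (h2.congr' ?_ ?_)
  · filter_upwards [eventually_gt_atTop (0:ℝ)] with t ht
    rw [Real.rpow_natCast, mul_assoc, ← Real.exp_add]
    ring_nf
  · filter_upwards with t
    rw [one_mul]

lemma integrableOn_pow_cexp_neg (n : ℕ) (hs : 0 < s.re) :
    IntegrableOn (fun t : ℝ => (t:ℂ)^n * Complex.exp (-(s*t))) (Set.Ioi 0) := by
  refine MeasureTheory.Integrable.mono' (integrableOn_pow_exp_neg n hs)
    ((Continuous.aestronglyMeasurable (by continuity)).restrict) ?_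
  filter_upwards [ae_restrict_mem measurableSet_Ioi] with t ht
  rw [norm_mul, norm_pow, Complex.norm_real, Real.norm_eq_abs, abs_of_pos ht, norm_cexp_neg]

lemma sne (hs : 0 < s.re) : s ≠ 0 := fun h => by simp [h] at hs

lemma integral_cexp_neg (hs : 0 < s.re) :
    ∫ t in Set.Ioi (0:ℝ), Complex.exp (-(s*t)) = 1/s := by
  have h0 := sne hs
  have key : ∀ x : ℝ, HasDerivAt (fun t:ℝ => -Complex.exp (-(s*t)) / s)
      (Complex.exp (-(s*x))) x := by
    intro x
    have h := ((hasDerivAt_cexp_neg s x).neg).div_const s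
    convert h using 1
    · rfl
    · rfl
    field_simp
  have hint : IntegrableOn (fun t : ℝ => Complex.exp (-(s*t))) (Set.Ioi 0) := by
    simpa using integrableOn_pow_cexp_neg 0 hs
  have htend : Tendsto (fun t:ℝ => -Complex.exp (-(s*t)) / s) atTop (𝓝 0) := by
    have := ((tendsto_pow_cexp_neg 0 hs).neg).div_const s
    simpa using this
  have := integral_Ioi_of_hasDerivAt_of_tendsto' (fun x _ => key x) hint htend
  rw [this]
  simp only [Complex.ofReal_zero, mul_zero, neg_zero, Complex.exp_zero]
  ring

lemma integral_id_cexp_neg (hs : 0 < s.re) :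
    ∫ t in Set.Ioi (0:ℝ), (t:ℂ) * Complex.exp (-(s*t)) = 1/s^2 := by
  have h0 := sne hs
  have key : ∀ x : ℝ, HasDerivAt (fun t:ℝ => -(Complex.exp (-(s*t)) * ((t:ℂ)/s + 1/s^2)))
      ((x:ℂ) * Complex.exp (-(s*x))) x := by
    intro x
    have hid : HasDerivAt (fun t:ℝ => (t:ℂ)) 1 x := Complex.ofRealCLM.hasDerivAt
    have hP : HasDerivAt (fun t:ℝ => (t:ℂ)/s + 1/s^2) (1/s) x := (hid.div_const s).add_const _
    have h := ((hasDerivAt_cexp_neg s x).mul hP).neg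
    convert h using 1
    · rfl
    · rfl
    field_simp
    ring
  have hint : IntegrableOn (fun t : ℝ => (t:ℂ) * Complex.exp (-(s*t))) (Set.Ioi 0) := by
    simpa using integrableOn_pow_cexp_neg 1 hs
  have htend : Tendsto (fun t:ℝ => -(Complex.exp (-(s*t)) * ((t:ℂ)/s + 1/s^2))) atTop (𝓝 0) := by
    have h1 := ((tendsto_pow_cexp_neg 1 hs).div_const s)
    have h0' := ((tendsto_pow_cexp_neg 0 hs).div_const (s^2))
    have := ((h1.add h0').neg)
    simp only [pow_one, pow_zero, one_mul] at h1 h0' this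
    refine Tendsto.congr ?_ (by simpa using this)
    intro t; ring
  have := integral_Ioi_of_hasDerivAt_of_tendsto' (fun x _ => key x) hint htend
  rw [this]
  simp only [Complex.ofReal_zero, mul_zero, neg_zero, Complex.exp_zero]
  ring

lemma integral_sq_cexp_neg (hs : 0 < s.re) :
    ∫ t in Set.Ioi (0:ℝ), (t:ℂ)^2 * Complex.exp (-(s*t)) = 2/s^3 := by
  have h0 := sne hs
  have key : ∀ x : ℝ, HasDerivAt
      (fun t:ℝ => -(Complex.exp (-(s*t)) * ((t:ℂ)^2/s + 2*(t:ℂ)/s^2 + 2/s^3)))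
      ((x:ℂ)^2 * Complex.exp (-(s*x))) x := by
    intro x
    have hid : HasDerivAt (fun t:ℝ => (t:ℂ)) 1 x := Complex.ofRealCLM.hasDerivAt
    have hsq : HasDerivAt (fun t:ℝ => (t:ℂ)^2) (2*(x:ℂ)) x := by
      simpa using (hasDerivAt_pow 2 ((x:ℝ):ℂ)).comp_ofReal
    have hP : HasDerivAt (fun t:ℝ => (t:ℂ)^2/s + 2*(t:ℂ)/s^2 + 2/s^3)
        (2*(x:ℂ)/s + 2/s^2) x := by
      have := ((hsq.div_const s).add ((hid.const_mul (2:ℂ)).div_const (s^2))).add_const (2/s^3)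
      simpa using this
    have h := ((hasDerivAt_cexp_neg s x).mul hP).neg
    convert h using 1
    · rfl
    · rfl
    field_simp
    ring
  have hint : IntegrableOn (fun t : ℝ => (t:ℂ)^2 * Complex.exp (-(s*t))) (Set.Ioi 0) :=
    integrableOn_pow_cexp_neg 2 hs
  have htend : Tendsto
      (fun t:ℝ => -(Complex.exp (-(s*t)) * ((t:ℂ)^2/s + 2*(t:ℂ)/s^2 + 2/s^3))) atTop (𝓝 0) := by
    have h2 := ((tendsto_pow_cexp_neg 2 hs).div_const s)
    have h1 := (((tendsto_pow_cexp_neg 1 hs).const_mul (2:ℂ)).div_const (s^2))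
    have h0' := ((tendsto_pow_cexp_neg 0 hs).const_mul (2:ℂ)).div_const (s^3)
    have := (((h2.add h1).add h0').neg)
    simp only [pow_one, pow_zero, mul_one, one_mul] at this
    refine Tendsto.congr ?_ (by simpa using this)
    intro t; ring
  have := integral_Ioi_of_hasDerivAt_of_tendsto' (fun x _ => key x) hint htend
  rw [this]
  simp only [Complex.ofReal_zero, mul_zero, neg_zero, Complex.exp_zero, ne_eq,
    OfNat.ofNat_ne_zero, not_false_eq_true, zero_pow, zero_div, zero_add, one_mul, zero_sub,
    neg_neg]

end helpers

theorem integral_screw_function {I : Type*} [Countable I] (B θ : ℝ) (m₀ : ℕ) (γ : I → ℂ)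
    (hθ : 0 ≤ θ) (hγ : ∀ k, γ k ≠ 0)
    (hsum : Summable fun k => 1 / ‖γ k‖ ^ 2)
    (him : ∀ k, |(γ k).im| ≤ θ) :
    ∀ z : ℂ, θ < z.im →
      (Summable fun k => ‖1 / (z - γ k) + 1 / γ k‖) ∧
      (∫ t in Set.Ioi (0 : ℝ),
          (-Complex.I * (B : ℂ) * (t : ℂ) - (m₀ : ℂ) / 2 * (t : ℂ) ^ 2
              + ∑' k, (Complex.exp (-Complex.I * γ k * t) - 1) / (γ k) ^ 2) *
            Complex.exp (Complex.I * z * t))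
        = 1 / z ^ 2 *
            (Complex.I * (B : ℂ) + Complex.I * (m₀ : ℂ) / z
              + Complex.I * ∑' k, (1 / (z - γ k) + 1 / γ k)) := by
  intro z hz
  have hz0 : (0:ℝ) < z.im := lt_of_le_of_lt hθ hz
  have hzne : z ≠ 0 := fun h => by simp [h] at hz0
  have hδ0 : (0:ℝ) < z.im - θ := by linarith
  have hzγ : ∀ k, z - γ k ≠ 0 := by
    intro k h
    have h1 : (z - γ k).im = 0 := by rw [h]; simp
    rw [Complex.sub_im] at h1
    have h2 := (abs_le.mp (him k)).2
    linarith
  -- summability of the RHS series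
  have hC : ∀ k, ‖1/(z - γ k) + 1/(γ k)‖ ≤ (2*‖z‖ + 2*‖z‖^2/(z.im - θ)) / ‖γ k‖^2 := by
    intro k
    have ha : (0:ℝ) < ‖γ k‖ := norm_pos_iff.mpr (hγ k)
    have hr : (0:ℝ) < ‖z - γ k‖ := norm_pos_iff.mpr (hzγ k)
    have hδr : z.im - θ ≤ ‖z - γ k‖ := by
      have h2 := (abs_le.mp (him k)).2
      calc z.im - θ ≤ (z - γ k).im := by rw [Complex.sub_im]; linarith
        _ ≤ |(z - γ k).im| := le_abs_self _
        _ ≤ ‖z - γ k‖ := by exact Complex.abs_im_le_norm _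
    have heq : 1/(z - γ k) + 1/(γ k) = z / ((z - γ k) * γ k) := by
      rw [div_add_div _ _ (hzγ k) (hγ k)]
      congr 1
      ring
    rw [heq, norm_div, norm_mul, div_le_div_iff₀ (by positivity) (by positivity)]
    have hD : (0:ℝ) ≤ 2*‖z‖^2/(z.im - θ) := by positivity
    have hDδ : (2*‖z‖^2/(z.im - θ)) * (z.im - θ) = 2*‖z‖^2 := div_mul_cancel₀ _ (ne_of_gt hδ0)
    rcases le_total ‖γ k‖ (2*‖z‖) with hcase | hcase
    · have h3 : 2*‖z‖^2*‖γ k‖ ≤ (2*‖z‖^2/(z.im - θ)) * ‖z - γ k‖ * ‖γ k‖ := by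
        have h := mul_le_mul_of_nonneg_right (mul_le_mul_of_nonneg_left hδr hD) ha.le
        rwa [hDδ] at h
      have h6 : ‖z‖*(‖γ k‖*‖γ k‖) ≤ ‖z‖*(2*‖z‖*‖γ k‖) :=
        mul_le_mul_of_nonneg_left (mul_le_mul_of_nonneg_right hcase ha.le) (norm_nonneg z)
      nlinarith [mul_nonneg (mul_nonneg (by positivity : (0:ℝ) ≤ 2*‖z‖) hr.le) ha.le]
    · have h4 : ‖γ k‖ - ‖z‖ ≤ ‖z - γ k‖ := by
        have h5 := abs_norm_sub_norm_le (γ k) z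
        rw [norm_sub_rev] at h5
        exact (abs_le.mp h5).2
      have m1 : 2*‖z‖*‖γ k‖*(‖γ k‖ - ‖z‖) ≤ 2*‖z‖*‖γ k‖*‖z - γ k‖ :=
        mul_le_mul_of_nonneg_left h4 (by positivity)
      have m2 : 2*‖z‖*(‖z‖*‖γ k‖) ≤ ‖γ k‖*(‖z‖*‖γ k‖) :=
        mul_le_mul_of_nonneg_right hcase (mul_nonneg (norm_nonneg z) ha.le)
      nlinarith [mul_nonneg hD (mul_nonneg hr.le ha.le)]
  have S1 : Summable (fun k => ‖1 / (z - γ k) + 1 / γ k‖) := by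
    refine Summable.of_nonneg_of_le (fun k => norm_nonneg _) hC ?_
    exact (hsum.mul_left (2*‖z‖ + 2*‖z‖^2/(z.im - θ))).congr fun k => by rw [mul_one_div]
  refine ⟨S1, ?_⟩
  -- basic facts about the exponents
  have hsre : (0:ℝ) < (-(Complex.I*z)).re := by rw [neg_I_mul_re]; exact hz0
  have hskre : ∀ k, (0:ℝ) < (-(Complex.I*(z - γ k))).re := by
    intro k
    rw [neg_I_mul_re, Complex.sub_im]
    have h2 := (abs_le.mp (him k)).2
    linarith
  have hEeq : ∀ t : ℝ, Complex.exp (-(-(Complex.I*z)*t)) = Complex.exp (Complex.I*z*t) := by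
    intro t; congr 1; ring
  have hEkeq : ∀ (k : I) (t : ℝ), Complex.exp (-Complex.I*γ k*t) * Complex.exp (Complex.I*z*t)
      = Complex.exp (-(-(Complex.I*(z - γ k))*t)) := by
    intro k t; rw [← Complex.exp_add]; congr 1; ring
  have hnormE : ∀ t : ℝ, ‖Complex.exp (Complex.I*z*(t:ℂ))‖ = Real.exp (-(z.im*t)) := by
    intro t
    rw [← hEeq t, norm_cexp_neg, neg_I_mul_re]
  -- the pointwise bound on the summands
  have hterm : ∀ (k : I) (t : ℝ), 0 ≤ t →
      ‖(Complex.exp (-Complex.I*γ k*t) - 1) / (γ k)^2‖ ≤ (Real.exp (θ*t) + 1)/‖γ k‖^2 := by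
    intro k t ht
    rw [norm_div, norm_pow]
    have hγpos : (0:ℝ) < ‖γ k‖ := norm_pos_iff.mpr (hγ k)
    gcongr
    calc ‖Complex.exp (-Complex.I*γ k*t) - 1‖
        ≤ ‖Complex.exp (-Complex.I*γ k*(t:ℂ))‖ + 1 := by
          have h := norm_sub_le (Complex.exp (-Complex.I*γ k*(t:ℂ))) (1:ℂ)
          rwa [norm_one] at h
      _ ≤ Real.exp (θ*t) + 1 := by
          have e : Complex.exp (-Complex.I*γ k*(t:ℂ)) = Complex.exp (-((Complex.I*γ k)*t)) := by
            congr 1; ring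
          rw [e, norm_cexp_neg]
          have hre : (Complex.I*γ k).re = -(γ k).im := by simp [Complex.mul_re]
          rw [hre]
          have h2 := (abs_le.mp (him k)).2
          have : -(-(γ k).im * t) = (γ k).im * t := by ring
          rw [this]
          have : (γ k).im * t ≤ θ * t := mul_le_mul_of_nonneg_right h2 ht
          simpa using Real.exp_le_exp.mpr this
  have hsummand : ∀ t : ℝ, 0 ≤ t →
      Summable (fun k => (Complex.exp (-Complex.I*γ k*t) - 1) / (γ k)^2) := by
    intro t ht
    apply Summable.of_norm
    refine Summable.of_nonneg_of_le (fun k => norm_nonneg _) (fun k => hterm k t ht) ?_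
    exact (hsum.mul_left (Real.exp (θ*t) + 1)).congr fun k => by rw [mul_one_div]
  -- dominated convergence for the series of integrals
  have hexp2 : ∀ t : ℝ, Real.exp (θ*t) * Real.exp (-(z.im*t)) = Real.exp (-((z.im - θ)*t)) := by
    intro t; rw [← Real.exp_add]; ring_nf
  have hFb : ∀ (k : I) (t : ℝ), 0 ≤ t →
      ‖(Complex.exp (-Complex.I*γ k*t) - 1) / (γ k)^2 * Complex.exp (Complex.I*z*t)‖
        ≤ (Real.exp (-((z.im - θ)*t)) + Real.exp (-(z.im*t))) * (1/‖γ k‖^2) := by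
    intro k t ht
    rw [norm_mul, hnormE]
    calc ‖(Complex.exp (-Complex.I*γ k*t) - 1) / (γ k)^2‖ * Real.exp (-(z.im*t))
        ≤ ((Real.exp (θ*t) + 1)/‖γ k‖^2) * Real.exp (-(z.im*t)) :=
          mul_le_mul_of_nonneg_right (hterm k t ht) (Real.exp_nonneg _)
      _ = (Real.exp (-((z.im - θ)*t)) + Real.exp (-(z.im*t))) * (1/‖γ k‖^2) := by
          rw [div_mul_eq_mul_div, add_mul, one_mul, hexp2, mul_one_div]
  have hgint : Integrable
      (fun t : ℝ => (Real.exp (-((z.im - θ)*t)) + Real.exp (-(z.im*t))) * (∑' k, 1/‖γ k‖^2))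
      (volume.restrict (Set.Ioi (0:ℝ))) := by
    apply Integrable.mul_const
    have i1 : IntegrableOn (fun t : ℝ => Real.exp (-((z.im - θ)*t))) (Set.Ioi 0) := by
      have h := exp_neg_integrableOn_Ioi (0:ℝ) hδ0
      simp only [neg_mul] at h
      exact h
    have i2 : IntegrableOn (fun t : ℝ => Real.exp (-(z.im*t))) (Set.Ioi 0) := by
      have h := exp_neg_integrableOn_Ioi (0:ℝ) hz0
      simp only [neg_mul] at h
      exact h
    exact i1.add i2
  have hFcont : ∀ k : I, Continuous (fun t : ℝ =>
      (Complex.exp (-Complex.I*γ k*t) - 1) / (γ k)^2 * Complex.exp (Complex.I*z*t)) := by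
    intro k
    apply Continuous.mul
    · apply Continuous.div_const
      exact (Complex.continuous_exp.comp
        (continuous_const.mul Complex.continuous_ofReal)).sub continuous_const
    · exact Complex.continuous_exp.comp (continuous_const.mul Complex.continuous_ofReal)
  have hFmeas : ∀ k : I, AEStronglyMeasurable (fun t : ℝ =>
      (Complex.exp (-Complex.I*γ k*t) - 1) / (γ k)^2 * Complex.exp (Complex.I*z*t))
      (volume.restrict (Set.Ioi (0:ℝ))) := fun k => ((hFcont k).aestronglyMeasurable).restrict
  have hFlim : ∀ᵐ (t : ℝ) ∂(volume.restrict (Set.Ioi (0:ℝ))),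
      HasSum (fun k => (Complex.exp (-Complex.I*γ k*t) - 1) / (γ k)^2 * Complex.exp (Complex.I*z*t))
        ((∑' k, (Complex.exp (-Complex.I*γ k*t) - 1) / (γ k)^2) * Complex.exp (Complex.I*z*t)) := by
    filter_upwards [ae_restrict_mem measurableSet_Ioi] with t ht
    exact (hsummand t (le_of_lt ht)).hasSum.mul_right _
  have hHasSum : HasSum
      (fun k => ∫ t in Set.Ioi (0:ℝ),
        (Complex.exp (-Complex.I*γ k*t) - 1) / (γ k)^2 * Complex.exp (Complex.I*z*t))
      (∫ t in Set.Ioi (0:ℝ),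
        (∑' k, (Complex.exp (-Complex.I*γ k*t) - 1) / (γ k)^2) * Complex.exp (Complex.I*z*t)) := by
    refine MeasureTheory.hasSum_integral_of_dominated_convergence
      (fun k t => (Real.exp (-((z.im - θ)*t)) + Real.exp (-(z.im*t))) * (1/‖γ k‖^2))
      hFmeas (fun k => ?_) ?_ ?_ hFlim
    · filter_upwards [ae_restrict_mem measurableSet_Ioi] with t ht
      exact hFb k t (le_of_lt ht)
    · filter_upwards with t
      exact hsum.mul_left _
    · have e : (fun t : ℝ => ∑' k, (Real.exp (-((z.im - θ)*t)) + Real.exp (-(z.im*t))) * (1/‖γ k‖^2))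
          = fun t : ℝ => (Real.exp (-((z.im - θ)*t)) + Real.exp (-(z.im*t))) * (∑' k, 1/‖γ k‖^2) := by
        funext t
        exact tsum_mul_left
      rw [e]
      exact hgint
  -- measurability and integrability of the series term
  have hTmeas : AEStronglyMeasurable (fun t : ℝ =>
      (∑' k, (Complex.exp (-Complex.I*γ k*t) - 1) / (γ k)^2) * Complex.exp (Complex.I*z*t))
      (volume.restrict (Set.Ioi (0:ℝ))) := by
    refine aestronglyMeasurable_of_tendsto_ae (atTop : Filter (Finset I))
      (f := fun (s : Finset I) (t : ℝ) => ∑ k ∈ s,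
        (Complex.exp (-Complex.I*γ k*t) - 1) / (γ k)^2 * Complex.exp (Complex.I*z*t))
      (fun s => ((continuous_finset_sum s fun k _ => hFcont k).aestronglyMeasurable).restrict) ?_
    filter_upwards [hFlim] with t ht
    exact ht
  have hSint : IntegrableOn (fun t : ℝ =>
      (∑' k, (Complex.exp (-Complex.I*γ k*t) - 1) / (γ k)^2) * Complex.exp (Complex.I*z*t))
      (Set.Ioi 0) := by
    refine hgint.mono' hTmeas ?_
    filter_upwards [ae_restrict_mem measurableSet_Ioi] with t ht
    have ht' : (0:ℝ) ≤ t := le_of_lt ht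
    rw [norm_mul, hnormE]
    have hTnorm : ‖∑' k, (Complex.exp (-Complex.I*γ k*t) - 1) / (γ k)^2‖
        ≤ (Real.exp (θ*t) + 1) * ∑' k, 1/‖γ k‖^2 := by
      have hn : Summable fun k => ‖(Complex.exp (-Complex.I*γ k*t) - 1) / (γ k)^2‖ := by
        refine Summable.of_nonneg_of_le (fun k => norm_nonneg _) (fun k => hterm k t ht') ?_
        exact (hsum.mul_left (Real.exp (θ*t) + 1)).congr fun k => by rw [mul_one_div]
      calc ‖∑' k, (Complex.exp (-Complex.I*γ k*t) - 1) / (γ k)^2‖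
          ≤ ∑' k, ‖(Complex.exp (-Complex.I*γ k*t) - 1) / (γ k)^2‖ := norm_tsum_le_tsum_norm hn
        _ ≤ ∑' k, (Real.exp (θ*t) + 1)/‖γ k‖^2 := by
            refine Summable.tsum_le_tsum (fun k => hterm k t ht') hn ?_
            exact (hsum.mul_left (Real.exp (θ*t) + 1)).congr fun k => by rw [mul_one_div]
        _ = ∑' k, (Real.exp (θ*t) + 1) * (1/‖γ k‖^2) :=
            tsum_congr fun k => (mul_one_div _ _).symm
        _ = (Real.exp (θ*t) + 1) * ∑' k, 1/‖γ k‖^2 := tsum_mul_left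
    calc ‖∑' k, (Complex.exp (-Complex.I*γ k*t) - 1) / (γ k)^2‖ * Real.exp (-(z.im*t))
        ≤ ((Real.exp (θ*t) + 1) * ∑' k, 1/‖γ k‖^2) * Real.exp (-(z.im*t)) :=
          mul_le_mul_of_nonneg_right hTnorm (Real.exp_nonneg _)
      _ = (Real.exp (-((z.im - θ)*t)) + Real.exp (-(z.im*t))) * (∑' k, 1/‖γ k‖^2) := by
          rw [mul_right_comm, add_mul, one_mul, hexp2]
  -- value of each summand integral
  have hIk : ∀ k : I, (∫ t in Set.Ioi (0:ℝ),
      (Complex.exp (-Complex.I*γ k*t) - 1) / (γ k)^2 * Complex.exp (Complex.I*z*t))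
      = (1/(-(Complex.I*(z - γ k))) - 1/(-(Complex.I*z))) / (γ k)^2 := by
    intro k
    have e : (fun t : ℝ => (Complex.exp (-Complex.I*γ k*t) - 1) / (γ k)^2 * Complex.exp (Complex.I*z*t))
        = fun t : ℝ => (Complex.exp (-(-(Complex.I*(z - γ k))*t))
            - Complex.exp (-(-(Complex.I*z)*t))) / (γ k)^2 := by
      funext t
      rw [div_mul_eq_mul_div, sub_mul, one_mul, hEkeq k t, hEeq t]
    rw [e, integral_div, integral_sub (by simpa [IntegrableOn] using integrableOn_pow_cexp_neg 0 (hskre k))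
      (by simpa [IntegrableOn] using integrableOn_pow_cexp_neg 0 hsre),
      integral_cexp_neg (hskre k), integral_cexp_neg hsre]
  -- split the integral
  have hEQ : (fun t : ℝ =>
      (-Complex.I * (B : ℂ) * (t : ℂ) - (m₀ : ℂ) / 2 * (t : ℂ) ^ 2
          + ∑' k, (Complex.exp (-Complex.I * γ k * t) - 1) / (γ k) ^ 2) *
        Complex.exp (Complex.I * z * t))
      = fun t : ℝ => (-Complex.I * (B:ℂ)) * ((t:ℂ) * Complex.exp (Complex.I*z*t))
          + (-((m₀:ℂ)/2)) * ((t:ℂ)^2 * Complex.exp (Complex.I*z*t))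
          + (∑' k, (Complex.exp (-Complex.I*γ k*t) - 1) / (γ k)^2) * Complex.exp (Complex.I*z*t) := by
    funext t
    ring
  have i1 : IntegrableOn (fun t : ℝ => (t:ℂ) * Complex.exp (Complex.I*z*t)) (Set.Ioi 0) := by
    have h := integrableOn_pow_cexp_neg 1 hsre
    simp only [pow_one, hEeq] at h
    exact h
  have i2 : IntegrableOn (fun t : ℝ => (t:ℂ)^2 * Complex.exp (Complex.I*z*t)) (Set.Ioi 0) := by
    have h := integrableOn_pow_cexp_neg 2 hsre
    simp only [hEeq] at h
    exact h
  have v1 : ∫ t in Set.Ioi (0:ℝ), (t:ℂ) * Complex.exp (Complex.I*z*t) = 1/(-(Complex.I*z))^2 := by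
    have h := integral_id_cexp_neg hsre
    simp only [hEeq] at h
    exact h
  have v2 : ∫ t in Set.Ioi (0:ℝ), (t:ℂ)^2 * Complex.exp (Complex.I*z*t) = 2/(-(Complex.I*z))^3 := by
    have h := integral_sq_cexp_neg hsre
    simp only [hEeq] at h
    exact h
  have v3 : (∫ t in Set.Ioi (0:ℝ),
      (∑' k, (Complex.exp (-Complex.I*γ k*t) - 1) / (γ k)^2) * Complex.exp (Complex.I*z*t))
      = ∑' k, ((1/(-(Complex.I*(z - γ k))) - 1/(-(Complex.I*z))) / (γ k)^2) := by
    rw [← hHasSum.tsum_eq]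
    exact tsum_congr hIk
  have ia1 : IntegrableOn (fun t : ℝ =>
      (-Complex.I * (B:ℂ)) * ((t:ℂ) * Complex.exp (Complex.I*z*t))) (Set.Ioi 0) :=
    i1.const_mul _
  have ia2 : IntegrableOn (fun t : ℝ =>
      (-((m₀:ℂ)/2)) * ((t:ℂ)^2 * Complex.exp (Complex.I*z*t))) (Set.Ioi 0) :=
    i2.const_mul _
  have ia12 : IntegrableOn (fun t : ℝ =>
      (-Complex.I * (B:ℂ)) * ((t:ℂ) * Complex.exp (Complex.I*z*t))
        + (-((m₀:ℂ)/2)) * ((t:ℂ)^2 * Complex.exp (Complex.I*z*t))) (Set.Ioi 0) :=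
    ia1.add ia2
  rw [hEQ, integral_add ia12 hSint, integral_add ia1 ia2, integral_const_mul, integral_const_mul,
    v1, v2, v3]
  -- final algebra
  have hIz : 1/(-(Complex.I*z)) = Complex.I/z := one_div_neg_I_mul hzne
  have hIzk : ∀ k : I, 1/(-(Complex.I*(z - γ k))) = Complex.I/(z - γ k) :=
    fun k => one_div_neg_I_mul (hzγ k)
  have htsum : ∑' k, ((1/(-(Complex.I*(z - γ k))) - 1/(-(Complex.I*z))) / (γ k)^2)
      = (1/z^2 * Complex.I) * ∑' k, (1/(z - γ k) + 1/γ k) := by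
    rw [← tsum_mul_left]
    refine tsum_congr fun k => ?_
    rw [hIzk k, hIz]
    have h1 := hγ k
    have h2 := hzγ k
    field_simp
    ring
  rw [htsum]
  have hI3 : Complex.I^3 = -Complex.I := by
    rw [pow_succ, Complex.I_sq]
    ring
  have hq2 : (1:ℂ)/(-(Complex.I*z))^2 = (Complex.I/z)^2 := by
    rw [← one_div_pow, hIz]
  have hq3 : (2:ℂ)/(-(Complex.I*z))^3 = 2*(1/(-(Complex.I*z)))^3 := by
    rw [one_div_pow]
    ring
  rw [hq2, hq3, hIz, div_pow, div_pow, Complex.I_sq, hI3]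
  ring
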